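/- Let G = ∫_0^1 1/(1 − log v) dv (natural logarithm, integral over (0,1)). Define integer sequences p, q by p(0)=0, p(1)=1, q(0)=1, q(1)=1, and p(n+1) = p(n) + c(n)·p(n−1), q(n+1) = q(n) + c(n)·q(n−1) for n ≥ 1, where c(n) = ⌈n/2⌉ (so the partial numerators are 1, 1, 2, 2, 3, 3, 4, 4, …). Then the sequence of convergents p(n)/q(n) (taking the values 0/1, 1/1, 1/2, 2/3, 4/7, 8/13, 20/34, 44/73, 124/209, 300/501, …) converges to G as n → ∞. -/

import Mathlib

/-- Partial numerators `1, 1, 2, 2, 3, 3, 4, 4, …` of Euler's continued fraction: `c n = ⌈n/2⌉`. -/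
def eulerCFnum (n : ℕ) : ℕ := (n + 1) / 2

/-- Numerators of the convergents. -/
def eulerCFp : ℕ → ℤ
  | 0 => 0
  | 1 => 1
  | n + 2 => eulerCFp (n + 1) + (eulerCFnum (n + 1) : ℤ) * eulerCFp n

/-- Denominators of the convergents. -/
def eulerCFq : ℕ → ℤ
  | 0 => 1
  | 1 => 1
  | n + 2 => eulerCFq (n + 1) + (eulerCFnum (n + 1) : ℤ) * eulerCFq n

open Polynomial MeasureTheory Set Filter

noncomputable section

/-- Pair (L m, M m) of monic Laguerre-type polynomials. -/
def eulerLM : ℕ → Polynomial ℝ × Polynomial ℝ := fun n =>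
  Nat.rec ((1 : Polynomial ℝ), (1 : Polynomial ℝ))
    (fun m p =>
      let Lnew := X * p.2 - C ((m : ℝ) + 1) * p.1
      (Lnew, Lnew - C ((m : ℝ) + 1) * p.2)) n

def eulerL (m : ℕ) : Polynomial ℝ := (eulerLM m).1
def eulerM (m : ℕ) : Polynomial ℝ := (eulerLM m).2

@[simp] lemma eulerL_zero : eulerL 0 = 1 := rfl
@[simp] lemma eulerM_zero : eulerM 0 = 1 := rfl
lemma eulerL_succ (m : ℕ) :
    eulerL (m + 1) = X * eulerM m - C ((m : ℝ) + 1) * eulerL m := rfl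
lemma eulerM_succ (m : ℕ) :
    eulerM (m + 1) = eulerL (m + 1) - C ((m : ℝ) + 1) * eulerM m := rfl

/-- S functional: integral against e^{-x} on (0,∞). -/
def eulerS (P : Polynomial ℝ) : ℝ := ∫ x in Ioi (0:ℝ), P.eval x * Real.exp (-x)

lemma integrableOn_poly_exp (P : Polynomial ℝ) :
    IntegrableOn (fun x => P.eval x * Real.exp (-x)) (Ioi (0:ℝ)) := by
  induction P using Polynomial.induction_on' with
  | add p q hp hq =>
    refine (hp.add hq).congr_fun (fun x _ => ?_) measurableSet_Ioi
    simp [add_mul]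
  | monomial n a =>
    have h := Real.GammaIntegral_convergent (s := (n : ℝ) + 1) (by positivity)
    have h2 : IntegrableOn (fun x : ℝ => Real.exp (-x) * x ^ n) (Ioi (0:ℝ)) := by
      refine h.congr_fun (fun x hx => ?_) measurableSet_Ioi
      simp only [add_sub_cancel_right, Real.rpow_natCast]
    simpa [mul_comm, mul_assoc, mul_left_comm, IntegrableOn] using (h2.const_mul a)

lemma eulerS_add (P Q : Polynomial ℝ) : eulerS (P + Q) = eulerS P + eulerS Q := by
  unfold eulerS
  simp only [eval_add, add_mul]
  exact integral_add (integrableOn_poly_exp P) (integrableOn_poly_exp Q)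

lemma eulerS_CMul (c : ℝ) (P : Polynomial ℝ) : eulerS (C c * P) = c * eulerS P := by
  unfold eulerS
  simp only [eval_mul, eval_C, mul_assoc]
  exact integral_const_mul c _

lemma eulerS_sub (P Q : Polynomial ℝ) : eulerS (P - Q) = eulerS P - eulerS Q := by
  have : P - Q + Q = P := by ring
  have h := eulerS_add (P - Q) Q
  rw [this] at h; linarith

@[simp] lemma eulerS_zero : eulerS 0 = 0 := by
  simpa using eulerS_CMul 0 0

lemma eulerS_Xpow (k : ℕ) : eulerS (X ^ k) = k.factorial := by
  unfold eulerS
  have h := Real.Gamma_eq_integral (s := (k : ℝ) + 1) (by positivity)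
  rw [Real.Gamma_nat_eq_factorial] at h
  rw [h]
  refine setIntegral_congr_fun measurableSet_Ioi (fun x hx => ?_)
  rw [add_sub_cancel_right, Real.rpow_natCast]
  simp [mul_comm]


/-- descFactorial cast identity: (k.descFactorial (m+1) : ℝ) = (k - m) * k.descFactorial m,
valid in ℝ with truncation handled. -/
lemma descFactorial_succ_real (k m : ℕ) :
    ((k.descFactorial (m + 1) : ℝ)) = ((k : ℝ) - m) * k.descFactorial m := by
  rcases le_or_gt m k with h | h
  · rw [Nat.descFactorial_succ]
    push_cast [Nat.cast_sub h]
    ring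
  · rw [Nat.descFactorial_eq_zero_iff_lt.2 h,
      Nat.descFactorial_eq_zero_iff_lt.2 (h.trans (Nat.lt_succ_self m))]
    simp

def eulerB (m k : ℕ) : ℝ :=
  if k = 0 then (-1) ^ m * m.factorial else k.factorial * ((k - 1).descFactorial m)

lemma euler_moments (m : ℕ) : ∀ k : ℕ,
    eulerS (eulerL m * X ^ k) = k.factorial * (k.descFactorial m) ∧
    eulerS (eulerM m * X ^ k) = eulerB m k := by
  induction m with
  | zero =>
    intro k
    constructor
    · simpa using eulerS_Xpow k
    · rcases Nat.eq_zero_or_pos k with rfl | hk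
      · simpa [eulerB] using eulerS_Xpow 0
      · have : eulerB 0 k = k.factorial := by
          simp [eulerB, Nat.pos_iff_ne_zero.1 hk]
        rw [this]
        simpa using eulerS_Xpow k
  | succ m ih =>
    have hL : ∀ k : ℕ, eulerS (eulerL (m + 1) * X ^ k)
        = k.factorial * (k.descFactorial (m + 1)) := by
      intro k
      have hsplit : eulerL (m + 1) * X ^ k
          = eulerM m * X ^ (k + 1) - C ((m : ℝ) + 1) * (eulerL m * X ^ k) := by
        rw [eulerL_succ]; ring
      rw [hsplit, eulerS_sub, eulerS_CMul, (ih (k+1)).2, (ih k).1]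
      have hb : eulerB m (k + 1) = (k+1).factorial * (k.descFactorial m) := by
        simp [eulerB]
      rw [hb, descFactorial_succ_real]
      push_cast [Nat.factorial_succ]
      ring
    intro k
    refine ⟨hL k, ?_⟩
    have hsplit : eulerM (m + 1) * X ^ k
        = eulerL (m + 1) * X ^ k - C ((m : ℝ) + 1) * (eulerM m * X ^ k) := by
      rw [eulerM_succ]; ring
    rw [hsplit, eulerS_sub, eulerS_CMul, hL k, (ih k).2]
    rcases Nat.eq_zero_or_pos k with rfl | hk
    · simp [eulerB, Nat.descFactorial_eq_zero_iff_lt.2 (Nat.succ_pos m), pow_succ,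
        Nat.factorial_succ]
      ring
    · obtain ⟨j, rfl⟩ := Nat.exists_eq_add_of_le hk
      have h1 : eulerB m (1 + j) = (1+j).factorial * (j.descFactorial m) := by
        simp [eulerB, Nat.add_comm 1 j]
      have h2 : eulerB (m+1) (1 + j) = (1+j).factorial * (j.descFactorial (m+1)) := by
        simp [eulerB, Nat.add_comm 1 j]
      rw [h1, h2]
      have h3 : ((1 + j).descFactorial (m + 1) : ℝ) = (j + 1) * j.descFactorial m := by
        rw [Nat.add_comm 1 j, Nat.succ_descFactorial_succ]
        push_cast; ring
      rw [h3, descFactorial_succ_real]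
      ring


lemma eulerS_finsetSum {s : Finset ℕ} (f : ℕ → Polynomial ℝ) :
    eulerS (∑ i ∈ s, f i) = ∑ i ∈ s, eulerS (f i) := by
  classical
  induction s using Finset.induction_on with
  | empty => simp
  | insert _ _ h ih => rw [Finset.sum_insert h, Finset.sum_insert h, eulerS_add, ih]

/-- Orthogonality of L m against lower-degree polynomials. -/
lemma eulerS_L_mul (m : ℕ) (P : Polynomial ℝ) (h : P.natDegree < m) :
    eulerS (eulerL m * P) = 0 := by
  conv_lhs => rw [P.as_sum_range' m h]
  rw [Finset.mul_sum, eulerS_finsetSum]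
  refine Finset.sum_eq_zero fun i hi => ?_
  rw [← C_mul_X_pow_eq_monomial, show eulerL m * (C (P.coeff i) * X ^ i)
    = C (P.coeff i) * (eulerL m * X ^ i) by ring, eulerS_CMul, (euler_moments m i).1,
    Nat.descFactorial_eq_zero_iff_lt.2 (Finset.mem_range.1 hi)]
  simp

/-- Orthogonality of X * M m against lower-degree polynomials (weighted). -/
lemma eulerS_M_mul (m : ℕ) (P : Polynomial ℝ) (h : P.natDegree < m) :
    eulerS (eulerM m * (X * P)) = 0 := by
  conv_lhs => rw [P.as_sum_range' m h]
  simp only [Finset.mul_sum]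
  rw [eulerS_finsetSum]
  refine Finset.sum_eq_zero fun i hi => ?_
  rw [← C_mul_X_pow_eq_monomial, show eulerM m * (X * (C (P.coeff i) * X ^ i))
    = C (P.coeff i) * (eulerM m * X ^ (i + 1)) by ring, eulerS_CMul, (euler_moments m (i+1)).2]
  have : eulerB m (i + 1) = (i+1).factorial * (i.descFactorial m) := by simp [eulerB]
  rw [this, Nat.descFactorial_eq_zero_iff_lt.2 (Finset.mem_range.1 hi)]
  simp


/-- Triple (ℓ̂, μ̂, m̂): quotient polynomials by (X+1). -/
def eulerHat : ℕ → Polynomial ℝ × Polynomial ℝ × Polynomial ℝ := fun n =>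
  Nat.rec ((0 : Polynomial ℝ), (1 : Polynomial ℝ), (0 : Polynomial ℝ))
    (fun m p =>
      let lh := p.2.1 - C ((m : ℝ) + 1) * p.1
      (lh, X * lh + C ((eulerL (m + 1)).eval (-1)) - C ((m : ℝ) + 1) * p.2.1,
        lh - C ((m : ℝ) + 1) * p.2.2)) n

def eulerlh (m : ℕ) : Polynomial ℝ := (eulerHat m).1
def eulermu (m : ℕ) : Polynomial ℝ := (eulerHat m).2.1
def eulermh (m : ℕ) : Polynomial ℝ := (eulerHat m).2.2

@[simp] lemma eulerlh_zero : eulerlh 0 = 0 := rfl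
@[simp] lemma eulermu_zero : eulermu 0 = 1 := rfl
@[simp] lemma eulermh_zero : eulermh 0 = 0 := rfl
lemma eulerlh_succ (m : ℕ) :
    eulerlh (m + 1) = eulermu m - C ((m : ℝ) + 1) * eulerlh m := rfl
lemma eulermu_succ (m : ℕ) :
    eulermu (m + 1) = X * eulerlh (m + 1) + C ((eulerL (m + 1)).eval (-1))
      - C ((m : ℝ) + 1) * eulermu m := rfl
lemma eulermh_succ (m : ℕ) :
    eulermh (m + 1) = eulerlh (m + 1) - C ((m : ℝ) + 1) * eulermh m := rfl

/-- Divisibility identities. -/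
lemma euler_div (m : ℕ) :
    (X + 1) * eulerlh m = eulerL m - C ((eulerL m).eval (-1)) ∧
    (X + 1) * eulermu m = X * eulerM m + C ((eulerM m).eval (-1)) ∧
    (X + 1) * eulermh m = eulerM m - C ((eulerM m).eval (-1)) := by
  induction m with
  | zero => simp
  | succ m ih =>
    obtain ⟨h1, h2, h3⟩ := ih
    have hLe : C ((eulerL (m + 1)).eval (-1))
        = -C ((eulerM m).eval (-1)) - C ((m : ℝ) + 1) * C ((eulerL m).eval (-1)) := by
      rw [eulerL_succ]
      simp only [eval_sub, eval_mul, eval_X, eval_C, C_sub, C_mul, C_neg, C_1, neg_mul, one_mul]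
      try ring
    have hMe : C ((eulerM (m + 1)).eval (-1))
        = C ((eulerL (m + 1)).eval (-1)) - C ((m : ℝ) + 1) * C ((eulerM m).eval (-1)) := by
      rw [eulerM_succ]
      simp only [eval_sub, eval_mul, eval_C, C_sub, C_mul]
    have k1 : (X + 1) * eulerlh (m + 1) = eulerL (m + 1) - C ((eulerL (m + 1)).eval (-1)) := by
      rw [eulerlh_succ, hLe, eulerL_succ]
      linear_combination h2 - C ((m : ℝ) + 1) * h1
    refine ⟨k1, ?_, ?_⟩
    · rw [eulermu_succ, hMe, eulerM_succ]
      linear_combination X * k1 - C ((m : ℝ) + 1) * h2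
    · rw [eulermh_succ, hMe, eulerM_succ]
      linear_combination k1 - C ((m : ℝ) + 1) * h3


lemma euler_deg : ∀ m : ℕ, (eulermu m).natDegree ≤ m ∧ (eulerlh m).natDegree ≤ m ∧
    (eulermh m).natDegree ≤ m := by
  have hc : ∀ m : ℕ, (C ((m:ℝ)+1)).natDegree = 0 := fun m => natDegree_C _
  intro m
  induction m with
  | zero => simp
  | succ m ih =>
    obtain ⟨h1, h2, h3⟩ := ih
    have hlh : (eulerlh (m + 1)).natDegree ≤ m := by
      rw [eulerlh_succ]
      refine le_trans (natDegree_sub_le _ _) ?_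
      exact max_le h1 (le_trans natDegree_mul_le (by rw [hc, Nat.zero_add]; exact h2))
    refine ⟨?_, hlh.trans (Nat.le_succ m), ?_⟩
    · rw [eulermu_succ]
      refine le_trans (natDegree_sub_le _ _) (max_le (le_trans (natDegree_add_le _ _) ?_) ?_)
      · refine max_le (le_trans natDegree_mul_le ?_) (by simp)
        calc X.natDegree + (eulerlh (m+1)).natDegree ≤ 1 + m :=
              Nat.add_le_add natDegree_X_le hlh
          _ = m + 1 := Nat.add_comm 1 m
      · exact le_trans natDegree_mul_le
          (by rw [hc, Nat.zero_add]; exact h1.trans (Nat.le_succ m))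
    · rw [eulermh_succ]
      refine le_trans (natDegree_sub_le _ _) ?_
      exact max_le (hlh.trans (Nat.le_succ m))
        (le_trans natDegree_mul_le (by rw [hc, Nat.zero_add]; exact h3.trans (Nat.le_succ m)))

lemma eulerlh_deg (m : ℕ) : (eulerlh (m+1)).natDegree ≤ m := by
  rw [eulerlh_succ]
  refine le_trans (natDegree_sub_le _ _) ?_
  exact max_le (euler_deg m).1 (le_trans natDegree_mul_le
    (by rw [natDegree_C, Nat.zero_add]; exact (euler_deg m).2.1))

lemma eulermh_deg (m : ℕ) : (eulermh (m+1)).natDegree ≤ m := by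
  rw [eulermh_succ]
  refine le_trans (natDegree_sub_le _ _) ?_
  exact max_le (eulerlh_deg m) (le_trans natDegree_mul_le
    (by rw [natDegree_C, Nat.zero_add]; exact (euler_deg m).2.2))


lemma eulerCFq_add2 (n : ℕ) :
    eulerCFq (n + 2) = eulerCFq (n + 1) + (eulerCFnum (n + 1) : ℤ) * eulerCFq n := rfl
lemma eulerCFp_add2 (n : ℕ) :
    eulerCFp (n + 2) = eulerCFp (n + 1) + (eulerCFnum (n + 1) : ℤ) * eulerCFp n := rfl

lemma eulerCFnum_odd (m : ℕ) : eulerCFnum (2 * m + 1) = m + 1 := by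
  unfold eulerCFnum; omega
lemma eulerCFnum_even (m : ℕ) : eulerCFnum (2 * m + 2) = m + 1 := by
  unfold eulerCFnum; omega

lemma q_even_succ (m : ℕ) :
    eulerCFq (2 * m + 2) = eulerCFq (2 * m + 1) + (m + 1 : ℤ) * eulerCFq (2 * m) := by
  rw [eulerCFq_add2, eulerCFnum_odd]; push_cast; ring
lemma q_odd_succ (m : ℕ) :
    eulerCFq (2 * m + 3) = eulerCFq (2 * m + 2) + (m + 1 : ℤ) * eulerCFq (2 * m + 1) := by
  rw [show 2 * m + 3 = (2 * m + 1) + 2 by ring, eulerCFq_add2, eulerCFnum_even]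
  push_cast; ring_nf
lemma p_even_succ (m : ℕ) :
    eulerCFp (2 * m + 2) = eulerCFp (2 * m + 1) + (m + 1 : ℤ) * eulerCFp (2 * m) := by
  rw [eulerCFp_add2, eulerCFnum_odd]; push_cast; ring
lemma p_odd_succ (m : ℕ) :
    eulerCFp (2 * m + 3) = eulerCFp (2 * m + 2) + (m + 1 : ℤ) * eulerCFp (2 * m + 1) := by
  rw [show 2 * m + 3 = (2 * m + 1) + 2 by ring, eulerCFp_add2, eulerCFnum_even]
  push_cast; ring_nf

@[simp] lemma eulerS_one : eulerS 1 = 1 := by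
  simpa using eulerS_Xpow 0
lemma eulerS_C (c : ℝ) : eulerS (C c) = c := by
  simpa using eulerS_CMul c 1

lemma eulerS_L_zero (m : ℕ) : eulerS (eulerL (m + 1)) = 0 := by
  have := (euler_moments (m + 1) 0).1
  simpa [Nat.descFactorial_eq_zero_iff_lt.2 (Nat.succ_pos m)] using this

/-- Identification of the polynomial data with the continued-fraction integers. -/
lemma euler_pq : ∀ m : ℕ,
    (eulerL m).eval (-1) = (-1 : ℝ) ^ m * (eulerCFq (2 * m) : ℝ) ∧
    (eulerM m).eval (-1) = (-1 : ℝ) ^ m * (eulerCFq (2 * m + 1) : ℝ) ∧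
    eulerS (eulerlh m) = (-1 : ℝ) ^ (m + 1) * (eulerCFp (2 * m) : ℝ) ∧
    eulerS (eulermu m) = (-1 : ℝ) ^ m * (eulerCFp (2 * m + 1) : ℝ) := by
  intro m
  induction m with
  | zero =>
    norm_num [eulerCFp, eulerCFq]
  | succ m ih =>
    obtain ⟨h1, h2, h3, h4⟩ := ih
    have hL1 : (eulerL (m + 1)).eval (-1)
        = (-1 : ℝ) ^ (m + 1) * (eulerCFq (2 * (m + 1)) : ℝ) := by
      rw [eulerL_succ, show 2 * (m + 1) = 2 * m + 2 by ring, q_even_succ]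
      simp only [eval_sub, eval_mul, eval_X, eval_C, h1, h2]
      push_cast
      ring
    have hM1 : (eulerM (m + 1)).eval (-1)
        = (-1 : ℝ) ^ (m + 1) * (eulerCFq (2 * (m + 1) + 1) : ℝ) := by
      rw [eulerM_succ, show 2 * (m + 1) + 1 = 2 * m + 3 by ring, q_odd_succ]
      simp only [eval_sub, eval_mul, eval_C, hL1, h2]
      rw [show 2 * (m + 1) = 2 * m + 2 by ring]
      push_cast
      ring
    have hlh1 : eulerS (eulerlh (m + 1))
        = (-1 : ℝ) ^ (m + 1 + 1) * (eulerCFp (2 * (m + 1)) : ℝ) := by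
      rw [eulerlh_succ, eulerS_sub, eulerS_CMul, h3, h4,
        show 2 * (m + 1) = 2 * m + 2 by ring, p_even_succ]
      push_cast
      ring
    refine ⟨hL1, hM1, hlh1, ?_⟩
    have hXlh : eulerS (X * eulerlh (m + 1))
        = -(eulerL (m + 1)).eval (-1) - eulerS (eulerlh (m + 1)) := by
      have hdiv := (euler_div (m + 1)).1
      have : eulerS ((X + 1) * eulerlh (m + 1))
          = eulerS (eulerL (m + 1)) - eulerS (C ((eulerL (m + 1)).eval (-1))) := by
        rw [hdiv, eulerS_sub]
      rw [show (X + 1) * eulerlh (m + 1) = X * eulerlh (m + 1) + eulerlh (m + 1) by ring,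
        eulerS_add, eulerS_L_zero, eulerS_C] at this
      linarith
    rw [eulermu_succ, eulerS_sub, eulerS_add, eulerS_CMul, eulerS_C, hXlh, hlh1, h4,
      show 2 * (m + 1) + 1 = 2 * m + 3 by ring, p_odd_succ,
      show 2 * (m + 1) = 2 * m + 2 by ring]
    push_cast
    ring


/-- T functional: integral against e^{-x}/(1+x) on (0,∞). -/
def eulerT (P : Polynomial ℝ) : ℝ :=
  ∫ x in Ioi (0:ℝ), P.eval x * (Real.exp (-x) / (1 + x))

lemma integrableOn_poly_exp_div (P : Polynomial ℝ) :
    IntegrableOn (fun x => P.eval x * (Real.exp (-x) / (1 + x))) (Ioi (0:ℝ)) := by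
  refine Integrable.mono (integrableOn_poly_exp P) ?_ ?_
  · refine AEStronglyMeasurable.mul ?_ ?_
    · exact (Polynomial.continuous_aeval P).aestronglyMeasurable.restrict
    · exact ((Real.measurable_exp.comp measurable_neg).div
        (measurable_const.add measurable_id)).aestronglyMeasurable
  · filter_upwards [ae_restrict_mem measurableSet_Ioi] with x hx
    have hx0 : (0:ℝ) < x := hx
    have h1 : (0:ℝ) < 1 + x := by linarith
    rw [Real.norm_eq_abs, Real.norm_eq_abs, abs_mul, abs_mul]
    refine mul_le_mul_of_nonneg_left ?_ (abs_nonneg _)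
    rw [abs_of_pos (by positivity : (0:ℝ) < Real.exp (-x) / (1 + x)),
      abs_of_pos (Real.exp_pos _)]
    rw [div_le_iff₀ h1]
    nlinarith [Real.exp_pos (-x)]
  
/-- Key decomposition: T(C r + (X+1)·W) = r·T(1) + S(W). -/
lemma eulerT_decomp (r : ℝ) (W : Polynomial ℝ) :
    eulerT (C r + (X + 1) * W) = r * eulerT 1 + eulerS W := by
  unfold eulerT eulerS
  have hcong : ∀ x ∈ Ioi (0:ℝ),
      (C r + (X + 1) * W).eval x * (Real.exp (-x) / (1 + x))
      = r * (Real.exp (-x) / (1 + x)) + W.eval x * Real.exp (-x) := by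
    intro x hx
    have hx0 : (0:ℝ) < x := hx
    have h1 : (1 + x) ≠ 0 := by positivity
    simp only [eval_add, eval_mul, eval_C, eval_X, eval_one]
    field_simp
    ring
  rw [setIntegral_congr_fun measurableSet_Ioi hcong]
  rw [integral_add]
  · congr 1
    · rw [integral_const_mul]
      congr 1
      refine setIntegral_congr_fun measurableSet_Ioi fun x hx => ?_
      simp
  · have := (integrableOn_poly_exp_div (C r))
    refine this.congr_fun (fun x hx => ?_) measurableSet_Ioi
    simp
  · exact integrableOn_poly_exp W

lemma eulerT_L_nonneg (m : ℕ) : 0 ≤ eulerT (eulerL m * eulerL m) := by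
  refine setIntegral_nonneg measurableSet_Ioi fun x hx => ?_
  have hx0 : (0:ℝ) < x := hx
  have : (0:ℝ) ≤ Real.exp (-x) / (1 + x) := by positivity
  simp only [eval_mul]
  exact mul_nonneg (mul_self_nonneg _) this

lemma eulerT_M_nonneg (m : ℕ) : 0 ≤ eulerT (X * (eulerM m * eulerM m)) := by
  refine setIntegral_nonneg measurableSet_Ioi fun x hx => ?_
  have hx0 : (0:ℝ) < x := hx
  have : (0:ℝ) ≤ Real.exp (-x) / (1 + x) := by positivity
  simp only [eval_mul, eval_X]
  exact mul_nonneg (mul_nonneg hx0.le (mul_self_nonneg _)) this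

/-- Substitution: T(1) equals the Gompertz integral on (0,1). -/
lemma eulerT_one : eulerT 1 = ∫ v in Ioo (0:ℝ) 1, 1 / (1 - Real.log v) := by
  have himg : (fun x : ℝ => Real.exp (-x)) '' (Ioi 0) = Ioo 0 1 := by
    ext v
    constructor
    · rintro ⟨x, hx, rfl⟩
      exact ⟨Real.exp_pos _, by
        rw [show (1:ℝ) = Real.exp 0 by simp]
        exact Real.exp_lt_exp.2 (by simpa using hx)⟩
    · rintro ⟨hv0, hv1⟩
      exact ⟨-Real.log v, by simpa using Real.log_neg hv0 hv1, by
        simp [Real.exp_log hv0]⟩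
  have hderiv : ∀ x ∈ Ioi (0:ℝ),
      HasDerivWithinAt (fun x : ℝ => Real.exp (-x)) (-Real.exp (-x)) (Ioi 0) x := by
    intro x _
    have h := (Real.hasDerivAt_exp (-x)).comp x ((hasDerivAt_id x).neg)
    simpa [Function.comp_def] using h.hasDerivWithinAt
  have hinj : Set.InjOn (fun x : ℝ => Real.exp (-x)) (Ioi 0) := by
    intro a _ b _ h
    have := Real.exp_injective h
    linarith
  have := MeasureTheory.integral_image_eq_integral_abs_deriv_smul measurableSet_Ioi
    hderiv hinj (fun v => 1 / (1 - Real.log v))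
  rw [himg] at this
  rw [this]
  unfold eulerT
  refine setIntegral_congr_fun measurableSet_Ioi fun x hx => ?_
  have : |(-Real.exp (-x))| = Real.exp (-x) := by
    rw [abs_neg, abs_of_pos (Real.exp_pos _)]
  rw [smul_eq_mul, this, Real.log_exp]
  simp only [eval_one, one_mul]
  rw [sub_neg_eq_add]
  ring


lemma eulerS_L_lh (m : ℕ) : eulerS (eulerL m * eulerlh m) = 0 := by
  cases m with
  | zero => simp
  | succ m => exact eulerS_L_mul (m+1) _ (lt_of_le_of_lt (eulerlh_deg m) (Nat.lt_succ_self m))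

lemma eulerS_M_mh (m : ℕ) : eulerS (eulerM m * (X * eulermh m)) = 0 := by
  cases m with
  | zero => simp
  | succ m => exact eulerS_M_mul (m+1) _ (lt_of_le_of_lt (eulermh_deg m) (Nat.lt_succ_self m))

lemma neg_one_sq_pow (m : ℕ) : ((-1:ℝ)) ^ m * ((-1:ℝ)) ^ m = 1 := by
  rw [← pow_add]
  exact Even.neg_one_pow ⟨m, rfl⟩

/-- Even main identity. -/
lemma euler_even_main (m : ℕ) :
    eulerT (eulerL m * eulerL m)
      = (eulerCFq (2*m) : ℝ)^2 * eulerT 1 - (eulerCFq (2*m) : ℝ) * (eulerCFp (2*m) : ℝ) := by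
  set c : ℝ := (eulerL m).eval (-1) with hc
  have h := (euler_div m).1
  have hdec : eulerL m * eulerL m
      = C (c*c) + (X + 1) * (C c * eulerlh m + eulerL m * eulerlh m) := by
    rw [C_mul]
    linear_combination (-(C c + eulerL m)) * h
  rw [hdec, eulerT_decomp, eulerS_add, eulerS_CMul, eulerS_L_lh]
  have h1 := (euler_pq m).1
  have h2 := (euler_pq m).2.2.1
  rw [← hc] at h1
  rw [h1, h2, pow_succ]
  linear_combination ((eulerCFq (2*m) : ℝ)^2 * eulerT 1
    - (eulerCFq (2*m) : ℝ) * (eulerCFp (2*m) : ℝ)) * (neg_one_sq_pow m)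

/-- Odd main identity. -/
lemma euler_odd_main (m : ℕ) :
    eulerT (X * (eulerM m * eulerM m))
      = (eulerCFq (2*m+1) : ℝ) * (eulerCFp (2*m+1) : ℝ)
        - (eulerCFq (2*m+1) : ℝ)^2 * eulerT 1 := by
  set d : ℝ := (eulerM m).eval (-1) with hd
  have h2 := (euler_div m).2.1
  have h3 := (euler_div m).2.2
  have hdec : X * (eulerM m * eulerM m)
      = C (-(d*d)) + (X + 1) * (C d * eulermu m + eulerM m * (X * eulermh m)) := by
    rw [C_neg, C_mul]
    linear_combination (-(C d)) * h2 + (-(X * eulerM m)) * h3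
  rw [hdec, eulerT_decomp, eulerS_add, eulerS_CMul, eulerS_M_mh]
  have h1 := (euler_pq m).2.1
  have h4 := (euler_pq m).2.2.2
  rw [← hd] at h1
  rw [h1, h4]
  linear_combination ((eulerCFq (2*m+1) : ℝ) * (eulerCFp (2*m+1) : ℝ)
    - (eulerCFq (2*m+1) : ℝ)^2 * eulerT 1) * (neg_one_sq_pow m)


lemma eulerCFq_pos : ∀ n, 0 < eulerCFq n := by
  intro n
  induction n using Nat.strong_induction_on with
  | _ n ih =>
    match n with
    | 0 => norm_num [eulerCFq]
    | 1 => norm_num [eulerCFq]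
    | (k+2) =>
      rw [eulerCFq_add2]
      have h1 := ih (k+1) (by omega)
      have h2 := ih k (by omega)
      have h3 : (0:ℤ) ≤ (eulerCFnum (k+1) : ℤ) := Int.natCast_nonneg _
      nlinarith

lemma eulerCFq_growth : ∀ m : ℕ, (m.factorial : ℤ) ≤ eulerCFq (2*m) ∧
    ((m+1).factorial : ℤ) ≤ eulerCFq (2*m+1) ∧
    ((m:ℤ)+1) * (m.factorial : ℤ)^2 ≤ eulerCFq (2*m) * eulerCFq (2*m+1) := by
  intro m
  induction m with
  | zero => norm_num [eulerCFq]
  | succ m ih =>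
    obtain ⟨h1, h2, h3⟩ := ih
    have hq0 := eulerCFq_pos (2*m)
    have hq1 := eulerCFq_pos (2*m+1)
    have he : eulerCFq (2*m+2) = eulerCFq (2*m+1) + ((m:ℤ)+1) * eulerCFq (2*m) :=
      q_even_succ m
    have ho : eulerCFq (2*m+3) = eulerCFq (2*m+2) + ((m:ℤ)+1) * eulerCFq (2*m+1) :=
      q_odd_succ m
    have hfac : ((m+1).factorial : ℤ) = ((m:ℤ)+1) * (m.factorial : ℤ) := by
      push_cast [Nat.factorial_succ]; ring
    have hfac2 : ((m+2).factorial : ℤ) = ((m:ℤ)+2) * ((m+1).factorial : ℤ) := by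
      push_cast [Nat.factorial_succ]; ring
    have hfpos : (0:ℤ) < (m.factorial : ℤ) := Int.natCast_pos.2 m.factorial_pos
    refine ⟨?_, ?_, ?_⟩
    · rw [show 2*(m+1) = 2*m+2 by ring, he]
      nlinarith
    · rw [show 2*(m+1)+1 = 2*m+3 by ring, ho, he, hfac2, hfac]
      nlinarith
    · rw [show 2*(m+1)+1 = 2*m+3 by ring, show 2*(m+1) = 2*m+2 by ring, ho, he, hfac]
      set A := eulerCFq (2*m)
      set B := eulerCFq (2*m+1)
      set f := (m.factorial : ℤ)
      set c := (m:ℤ)+1 with hcdef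
      have hc : (0:ℤ) < c := by rw [hcdef]; positivity
      have hBf : c * f ≤ B := by rw [hfac] at h2; exact h2
      have hq2 : c * f ≤ B + c * A := le_trans hBf (by nlinarith)
      have t1 : (c*f)^2 ≤ (B + c*A)^2 := pow_le_pow_left₀ (by positivity) hq2 2
      have t2 : c^2 * (c * f^2) ≤ c^2 * (A * B) :=
        mul_le_mul_of_nonneg_left h3 (by positivity)
      have t3 : (0:ℤ) ≤ c * B^2 := mul_nonneg hc.le (sq_nonneg B)
      push_cast
      nlinarith [t1, t2, t3]

lemma det_succ (n : ℕ) :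
    eulerCFp (n+2) * eulerCFq (n+1) - eulerCFp (n+1) * eulerCFq (n+2)
      = -(eulerCFnum (n+1) : ℤ) * (eulerCFp (n+1) * eulerCFq n - eulerCFp n * eulerCFq (n+1)) := by
  rw [eulerCFp_add2, eulerCFq_add2]; ring

lemma det_even : ∀ m : ℕ,
    eulerCFp (2*m+1) * eulerCFq (2*m) - eulerCFp (2*m) * eulerCFq (2*m+1)
      = ((m.factorial : ℤ))^2 := by
  intro m
  induction m with
  | zero => norm_num [eulerCFq, eulerCFp]
  | succ m ih =>
    have s1 := det_succ (2*m)
    have s2 := det_succ (2*m+1)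
    rw [eulerCFnum_odd] at s1
    rw [show 2*m+1+1 = 2*m+2 by ring, eulerCFnum_even] at s2
    have hfac : ((m+1).factorial : ℤ) = ((m:ℤ)+1) * (m.factorial : ℤ) := by
      push_cast [Nat.factorial_succ]; ring
    rw [show 2*(m+1)+1 = 2*m+1+2 by ring, show 2*(m+1) = 2*m+2 by ring]
    rw [show (2*m+1)+1 = 2*m+2 by ring] at s2 s1
    rw [show (2*m+1)+2 = 2*m+3 by ring] at s2
    rw [show 2*m+3 = 2*m+1+2 by ring] at *
    push_cast at s1 s2 ⊢
    rw [hfac]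
    linear_combination s2 - ((m:ℤ)+1) * s1 + ((m:ℤ)+1)^2 * ih


lemma conv_even (m : ℕ) :
    (eulerCFp (2*m) : ℝ) / (eulerCFq (2*m) : ℝ) ≤ eulerT 1 := by
  have h := euler_even_main m
  have pos := eulerT_L_nonneg m
  have hq : (0:ℝ) < (eulerCFq (2*m) : ℝ) := by exact_mod_cast eulerCFq_pos (2*m)
  rw [div_le_iff₀ hq]
  nlinarith

lemma conv_odd (m : ℕ) :
    eulerT 1 ≤ (eulerCFp (2*m+1) : ℝ) / (eulerCFq (2*m+1) : ℝ) := by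
  have h := euler_odd_main m
  have pos := eulerT_M_nonneg m
  have hq : (0:ℝ) < (eulerCFq (2*m+1) : ℝ) := by exact_mod_cast eulerCFq_pos (2*m+1)
  rw [le_div_iff₀ hq]
  nlinarith

lemma conv_gap (m : ℕ) :
    (eulerCFp (2*m+1) : ℝ) / (eulerCFq (2*m+1) : ℝ)
      - (eulerCFp (2*m) : ℝ) / (eulerCFq (2*m) : ℝ) ≤ ((m:ℝ)+1)⁻¹ := by
  have hq : (0:ℝ) < (eulerCFq (2*m) : ℝ) := by exact_mod_cast eulerCFq_pos (2*m)
  have hq' : (0:ℝ) < (eulerCFq (2*m+1) : ℝ) := by exact_mod_cast eulerCFq_pos (2*m+1)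
  have hdet : (eulerCFp (2*m+1) : ℝ) * (eulerCFq (2*m) : ℝ)
      - (eulerCFp (2*m) : ℝ) * (eulerCFq (2*m+1) : ℝ) = ((m.factorial : ℝ))^2 := by
    exact_mod_cast det_even m
  have hgrow : ((m:ℝ)+1) * ((m.factorial : ℝ))^2
      ≤ (eulerCFq (2*m) : ℝ) * (eulerCFq (2*m+1) : ℝ) := by
    exact_mod_cast (eulerCFq_growth m).2.2
  have hdet2 : (eulerCFp (2*m+1) : ℝ) * (eulerCFq (2*m) : ℝ)
      - (eulerCFq (2*m+1) : ℝ) * (eulerCFp (2*m) : ℝ) = ((m.factorial : ℝ))^2 := by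
    rw [mul_comm ((eulerCFq (2*m+1) : ℝ))]; exact hdet
  rw [div_sub_div _ _ (ne_of_gt hq') (ne_of_gt hq), hdet2]
  rw [div_le_iff₀ (mul_pos hq' hq), ← one_div, div_mul_eq_mul_div, le_div_iff₀ (by positivity)]
  nlinarith

lemma conv_bound (n : ℕ) :
    |(eulerCFp n : ℝ) / (eulerCFq n : ℝ) - eulerT 1| ≤ (((n/2 : ℕ) : ℝ) + 1)⁻¹ := by
  obtain ⟨m, hm | hm⟩ := Nat.even_or_odd' n
  · subst hm
    have hdiv : (2*m)/2 = m := by omega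
    rw [hdiv, abs_le]
    have h1 := conv_even m
    have h2 := conv_odd m
    have h3 := conv_gap m
    have hpos : (0:ℝ) < ((m:ℝ)+1)⁻¹ := by positivity
    constructor <;> linarith
  · subst hm
    have hdiv : (2*m+1)/2 = m := by omega
    rw [hdiv, abs_le]
    have h1 := conv_even m
    have h2 := conv_odd m
    have h3 := conv_gap m
    have hpos : (0:ℝ) < ((m:ℝ)+1)⁻¹ := by positivity
    constructor <;> linarith

/-- The convergents `0/1, 1/1, 1/2, 2/3, 4/7, 8/13, 20/34, 44/73, 124/209, 300/501, …`
of Euler's continued fraction (§§21–22) converge to the Gompertz constant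
`G = ∫_0^1 dv/(1 - log v)`. -/
theorem eulerCF_tendsto_gompertz :
    Filter.Tendsto (fun n : ℕ => (eulerCFp n : ℝ) / (eulerCFq n : ℝ)) Filter.atTop
      (nhds (∫ v in Set.Ioo (0 : ℝ) 1, 1 / (1 - Real.log v))) := by
  rw [← eulerT_one]
  have hnat : Filter.Tendsto (fun n : ℕ => n/2 + 1) atTop atTop := by
    apply Filter.tendsto_atTop_atTop.2
    intro b
    exact ⟨2*b, fun n hn => by omega⟩
  have h1 : Filter.Tendsto (fun n : ℕ => ((n/2 + 1 : ℕ) : ℝ)) atTop atTop :=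
    tendsto_natCast_atTop_atTop.comp hnat
  have hg : Filter.Tendsto (fun n : ℕ => (((n/2 : ℕ) : ℝ) + 1)⁻¹) atTop (nhds 0) := by
    have := tendsto_inv_atTop_zero.comp h1
    refine this.congr fun n => ?_
    push_cast
    rfl
  have key : Filter.Tendsto
      (fun n : ℕ => (eulerCFp n : ℝ) / (eulerCFq n : ℝ) - eulerT 1) atTop (nhds 0) :=
    squeeze_zero_norm conv_bound hg
  have := key.add_const (eulerT 1)
  simpa using this

end
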